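/- For every integer a and all signs ε, ε₁, ε₂ ∈ {1, −1}, the group Π(a, ε, ε₁, ε₂) is isomorphic to Π(−a, ε, ε₁, ε₂). -/

import Mathlib

/-- The relator set of the presentation
`⟨s₁, s₂, s₃ ∣ s₁s₂s₁⁻¹ = s₃^a s₂^ε, s₁s₃s₁⁻¹ = s₃^{ε₁}, s₂s₃s₂⁻¹ = s₃^{ε₂}⟩`. -/
def PiRels (a ε ε₁ ε₂ : ℤ) : Set (FreeGroup (Fin 3)) :=
  { FreeGroup.of 0 * FreeGroup.of 1 * (FreeGroup.of 0)⁻¹ * FreeGroup.of 1 ^ (-ε) *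
      FreeGroup.of 2 ^ (-a),
    FreeGroup.of 0 * FreeGroup.of 2 * (FreeGroup.of 0)⁻¹ * FreeGroup.of 2 ^ (-ε₁),
    FreeGroup.of 1 * FreeGroup.of 2 * (FreeGroup.of 1)⁻¹ * FreeGroup.of 2 ^ (-ε₂) }

/-- The group `Π(a, ε, ε₁, ε₂)` with presentation
`⟨s₁, s₂, s₃ ∣ s₁s₂s₁⁻¹ = s₃^a s₂^ε, s₁s₃s₁⁻¹ = s₃^{ε₁}, s₂s₃s₂⁻¹ = s₃^{ε₂}⟩`. -/
abbrev PiGroup (a ε ε₁ ε₂ : ℤ) : Type := PresentedGroup (PiRels a ε ε₁ ε₂)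

namespace PiNegAux

open PresentedGroup

lemma mk_rel {a ε ε₁ ε₂ : ℤ} {r : FreeGroup (Fin 3)} (hr : r ∈ PiRels a ε ε₁ ε₂) :
    PresentedGroup.mk (PiRels a ε ε₁ ε₂) r = 1 :=
  (QuotientGroup.eq_one_iff _).mpr (Subgroup.subset_normalClosure hr)

lemma rel1 (a ε ε₁ ε₂ : ℤ) :
    (of 0 : PiGroup a ε ε₁ ε₂) * of 1 * (of 0)⁻¹ * of 1 ^ (-ε) * of 2 ^ (-a) = 1 := by
  have := mk_rel (a := a) (ε := ε) (ε₁ := ε₁) (ε₂ := ε₂) (Set.mem_insert _ _)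
  simpa [map_mul, map_zpow, map_inv, PresentedGroup.of] using this

lemma rel2 (a ε ε₁ ε₂ : ℤ) :
    (of 0 : PiGroup a ε ε₁ ε₂) * of 2 * (of 0)⁻¹ * of 2 ^ (-ε₁) = 1 := by
  have := mk_rel (a := a) (ε := ε) (ε₁ := ε₁) (ε₂ := ε₂)
    (Set.mem_insert_of_mem _ (Set.mem_insert _ _))
  simpa [map_mul, map_zpow, map_inv, PresentedGroup.of] using this

lemma rel3 (a ε ε₁ ε₂ : ℤ) :
    (of 1 : PiGroup a ε ε₁ ε₂) * of 2 * (of 1)⁻¹ * of 2 ^ (-ε₂) = 1 := by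
  have := mk_rel (a := a) (ε := ε) (ε₁ := ε₁) (ε₂ := ε₂)
    (Set.mem_insert_of_mem _ (Set.mem_insert_of_mem _ rfl))
  simpa [map_mul, map_zpow, map_inv, PresentedGroup.of] using this

/-- The target values of the homomorphism: `s₁ ↦ s₁, s₂ ↦ s₂, s₃ ↦ s₃⁻¹`. -/
def fval (b ε ε₁ ε₂ : ℤ) : Fin 3 → PiGroup b ε ε₁ ε₂ :=
  ![of 0, of 1, (of 2)⁻¹]

lemma conj_inv {G : Type*} [Group G] (x z : G) (c : ℤ) (h : x * z * x⁻¹ * z ^ (-c) = 1) :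
    x * z⁻¹ * x⁻¹ * z⁻¹ ^ (-c) = 1 := by
  have hc : x * z * x⁻¹ = z ^ c := by
    have := mul_eq_one_iff_eq_inv.mp h
    rwa [zpow_neg, inv_inv] at this
  rw [inv_zpow, ← zpow_neg, neg_neg]
  calc x * z⁻¹ * x⁻¹ * z ^ c = (x * z * x⁻¹)⁻¹ * z ^ c := by group
    _ = (z ^ c)⁻¹ * z ^ c := by rw [hc]
    _ = 1 := inv_mul_cancel _

lemma lift_cond (a b ε ε₁ ε₂ : ℤ) (hab : b = -a) :
    ∀ r ∈ PiRels a ε ε₁ ε₂, FreeGroup.lift (fval b ε ε₁ ε₂) r = 1 := by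
  rintro r (rfl | rfl | rfl) <;>
    simp only [map_mul, map_zpow, map_inv, FreeGroup.lift_apply_of, fval, Matrix.cons_val_zero,
      Matrix.cons_val_one, Matrix.head_cons, Matrix.cons_val_two, Matrix.tail_cons]
  · have h := rel1 b ε ε₁ ε₂
    have hb : (-b) = a := by omega
    rw [inv_zpow, ← zpow_neg, neg_neg, ← hb]
    exact h
  · exact conj_inv _ _ _ (rel2 b ε ε₁ ε₂)
  · exact conj_inv _ _ _ (rel3 b ε ε₁ ε₂)

/-- The homomorphism `Π(a) → Π(b)` (for `b = -a`) sending `s₁ ↦ s₁, s₂ ↦ s₂, s₃ ↦ s₃⁻¹`. -/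
def hom (a b ε ε₁ ε₂ : ℤ) (hab : b = -a) : PiGroup a ε ε₁ ε₂ →* PiGroup b ε ε₁ ε₂ :=
  toGroup (lift_cond a b ε ε₁ ε₂ hab)

lemma hom_of (a b ε ε₁ ε₂ : ℤ) (hab : b = -a) (x : Fin 3) :
    hom a b ε ε₁ ε₂ hab (of x) = fval b ε ε₁ ε₂ x :=
  toGroup.of _

lemma comp_hom (a b ε ε₁ ε₂ : ℤ) (hab : b = -a) (hba : a = -b) :
    (hom b a ε ε₁ ε₂ hba).comp (hom a b ε ε₁ ε₂ hab) = MonoidHom.id _ := by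
  apply PresentedGroup.ext
  intro x
  fin_cases x <;>
    simp [hom_of, fval]

end PiNegAux

/-- `Π(a, ε, ε₁, ε₂) ≅ Π(−a, ε, ε₁, ε₂)`. -/
theorem PiGroup_iso_neg (a ε ε₁ ε₂ : ℤ)
    (hε : ε = 1 ∨ ε = -1) (hε₁ : ε₁ = 1 ∨ ε₁ = -1) (hε₂ : ε₂ = 1 ∨ ε₂ = -1) :
    Nonempty (PiGroup a ε ε₁ ε₂ ≃* PiGroup (-a) ε ε₁ ε₂) := by
  exact ⟨MonoidHom.toMulEquiv
    (PiNegAux.hom a (-a) ε ε₁ ε₂ rfl)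
    (PiNegAux.hom (-a) a ε ε₁ ε₂ (neg_neg a).symm)
    (PiNegAux.comp_hom a (-a) ε ε₁ ε₂ rfl (neg_neg a).symm)
    (PiNegAux.comp_hom (-a) a ε ε₁ ε₂ (neg_neg a).symm rfl)⟩
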